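/- Let N ≥ 2 and let I_R, O_R (R = 1,…,N) be arbitrary sets. Let w : ∏_R O_R → ∏_R I_R be such that each component w_S is constant over O_S. If there exists a region R such that for every local operation f_R : I_R → O_R the reduced function w^{f_R} is a process function on the remaining N−1 regions, then w is a process function. -/

import Mathlib

/-- Extend a tuple of outputs for all regions other than `R` by a value `x : O R`
in the `R`-slot, producing a full output tuple. -/
def extendAt {N : ℕ} {O : Fin N → Type*} (R : Fin N)
    (o' : ∀ S, S ≠ R → O S) (x : O R) : ∀ S, O S :=
  fun S => if h : S = R then cast (congrArg O h).symm x else o' S h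

/-- Let each component of `w` be constant over its own region's output.  If there is a
region `R` such that for every local operation `f_R : I R → O R` the reduced function
`w^{f_R}_S(o_{∖R}) = w_S(o_{∖R}, f_R(w_R(o_{∖R})))` is a process function on the
remaining `N − 1` regions (for every collection `g` of local operations on the other
regions there is a fixed point `i'`, the `R`-slot of the full output tuple carrying the
self-consistent value `x = f_R(w_R(o_{∖R}))`), then `w` is a process function. -/
theorem process_of_reduced_process {N : ℕ} (hN : 2 ≤ N) (I O : Fin N → Type*)
    (w : (∀ S, O S) → (∀ S, I S))
    (hconst : ∀ (S : Fin N) (o o' : ∀ T, O T),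
      (∀ T, T ≠ S → o T = o' T) → w o S = w o' S)
    (R : Fin N)
    (hred : ∀ fR : I R → O R, ∀ g : ∀ S, S ≠ R → (I S → O S),
      ∃ i' : ∀ S, S ≠ R → I S, ∃ x : O R,
        x = fR (w (extendAt R (fun S h => g S h (i' S h)) x) R) ∧
        ∀ (S : Fin N) (h : S ≠ R),
          w (extendAt R (fun S h => g S h (i' S h)) x) S = i' S h) :
    ∀ f : ∀ S, I S → O S, ∃ i : ∀ S, I S, w (fun S => f S (i S)) = i := by
  intro f
  obtain ⟨i', x, hx, hfix⟩ := hred (f R) (fun S _ => f S)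
  set o := extendAt R (fun S h => f S (i' S h)) x with ho
  refine ⟨w o, ?_⟩
  have key : (fun S => f S (w o S)) = o := by
    funext S
    by_cases h : S = R
    · subst h
      simp [ho, extendAt, ← hx]
      exact hx.symm
    · simp [ho, extendAt, h, hfix S h]
      exact congrArg (f S) (hfix S h)
  rw [key]
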